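/- Let q ∈ ℝ² and let σ₁, …, σ_m be closed line segments in ℝ². Let A ⊆ AddCircle π be the image under the quotient map ℝ → AddCircle π of the set {θ ∈ ℝ : the line {q + r • (cos θ, sin θ) : r ∈ ℝ} meets every σᵢ} (this set is invariant under θ ↦ θ + π). Then A has at most m connected components: either A is empty, or there exist points θ₁, …, θ_m ∈ A such that every point of A lies in the connected component within A of some θⱼ. -/

import Mathlib

open Set

noncomputable section

/-- The line in ℝ² through `a` with direction `v`. -/
def lineThrough2 (a v : ℝ × ℝ) : Set (ℝ × ℝ) :=
  {p | ∃ r : ℝ, p = a + r • v}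

/-- `L` is a line in ℝ². -/
def IsLine2 (L : Set (ℝ × ℝ)) : Prop :=
  ∃ a v : ℝ × ℝ, v ≠ 0 ∧ L = lineThrough2 a v

lemma angle_char (w1 w2 φ : ℝ) (hw : 0 < w1^2 + w2^2)
    (hcos : Real.cos φ = w1 / Real.sqrt (w1^2+w2^2))
    (hsin : Real.sin φ = w2 / Real.sqrt (w1^2+w2^2))
    (v : ℝ × ℝ) (hv : 0 < v.1*w1 + v.2*w2) (θ : ℝ) :
    (∃ r : ℝ, v = r • (Real.cos θ, Real.sin θ)) ↔
      ∃ k : ℤ, θ = (φ + Real.arctan ((v.2*w1 - v.1*w2)/(v.1*w1 + v.2*w2))) + k * Real.pi := by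
  set n := Real.sqrt (w1^2+w2^2) with hn_def
  have hn : 0 < n := Real.sqrt_pos.2 hw
  have hn2 : n^2 = w1^2+w2^2 := Real.sq_sqrt hw.le
  set D := v.1*w1 + v.2*w2 with hD_def
  have hv2 : 0 < v.1^2 + v.2^2 := by nlinarith [sq_nonneg (v.1*w2 - v.2*w1), sq_nonneg D]
  set Nv := Real.sqrt (v.1^2+v.2^2) with hNv_def
  have hNv : 0 < Nv := Real.sqrt_pos.2 hv2
  have hNv2 : Nv^2 = v.1^2+v.2^2 := Real.sq_sqrt hv2.le
  set g := (v.2*w1 - v.1*w2)/D with hg_def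
  set s := Real.sqrt (1+g^2) with hs_def
  have hs2 : s^2 = 1+g^2 := Real.sq_sqrt (by positivity)
  have hs : 0 < s := Real.sqrt_pos.2 (by positivity)
  have hDg : D * g = v.2*w1 - v.1*w2 := by rw [hg_def, mul_div_assoc', mul_comm D, mul_div_assoc, div_self (ne_of_gt hv), mul_one]
  have key : D * s = Nv * n := by
    have h1 : (D*s)^2 = (Nv*n)^2 := by
      have : (D*s)^2 = D^2 + (D*g)^2 := by rw [mul_pow, hs2]; ring
      rw [this, hDg, mul_pow, hNv2, hn2]; ring
    calc D*s = Real.sqrt ((D*s)^2) := (Real.sqrt_sq (by positivity)).symm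
    _ = Real.sqrt ((Nv*n)^2) := by rw [h1]
    _ = Nv*n := Real.sqrt_sq (by positivity)
  clear_value n D Nv g s
  set ψ := φ + Real.arctan g with hψ_def
  have hcosψ : Real.cos ψ = v.1 / Nv := by
    rw [hψ_def, Real.cos_add, Real.cos_arctan, Real.sin_arctan, hcos, hsin]
    rw [← hs_def]
    have h1 : (w1 - w2*g)*D = v.1*n^2 := by rw [hn2]; linear_combination (-w2)*hDg + w1*hD_def
    field_simp
    have h2 : (w1 - w2*g)*Nv*D = v.1*(n*s)*D := by linear_combination Nv*h1 - v.1*n*key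
    exact mul_right_cancel₀ (ne_of_gt hv) (by linear_combination h2)
  have hsinψ : Real.sin ψ = v.2 / Nv := by
    rw [hψ_def, Real.sin_add, Real.cos_arctan, Real.sin_arctan, hcos, hsin]
    rw [← hs_def]
    have h1 : (w2 + w1*g)*D = v.2*n^2 := by rw [hn2]; linear_combination w1*hDg + w2*hD_def
    field_simp
    have h2 : (w2 + w1*g)*Nv*D = v.2*(n*s)*D := by linear_combination Nv*h1 - v.2*n*key
    exact mul_right_cancel₀ (ne_of_gt hv) (by linear_combination h2)
  have hNvne : Nv ≠ 0 := ne_of_gt hNv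
  constructor
  · rintro ⟨r, hr⟩
    have h1 : v.1 = r * Real.cos θ := by rw [hr]; simp [smul_eq_mul]
    have h2 : v.2 = r * Real.sin θ := by rw [hr]; simp [smul_eq_mul]
    have hpyth := Real.sin_sq_add_cos_sq θ
    have hr2 : r^2 = Nv^2 := by rw [hNv2, h1, h2]; linear_combination (-r^2)*hpyth
    have : (r - Nv) * (r + Nv) = 0 := by linear_combination hr2
    have hc' : Real.cos (θ - ψ) = r / Nv := by
      rw [Real.cos_sub, hcosψ, hsinψ, h1, h2]
      field_simp
      linear_combination r*hpyth
    rcases mul_eq_zero.1 this with h | h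
    · have hrNv : r = Nv := by linarith
      have hc : Real.cos (θ - ψ) = 1 := by rw [hc', hrNv, div_self hNvne]
      obtain ⟨k, hk⟩ := (Real.cos_eq_one_iff _).1 hc
      exact ⟨2*k, by push_cast; linarith⟩
    · have hrNv : r = -Nv := by linarith
      have hc : Real.cos (θ - ψ - Real.pi) = 1 := by
        rw [Real.cos_sub_pi, hc', hrNv, neg_div, div_self hNvne, neg_neg]
      obtain ⟨k, hk⟩ := (Real.cos_eq_one_iff _).1 hc
      exact ⟨2*k+1, by push_cast; linarith⟩
  · rintro ⟨k, rfl⟩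
    rcases Int.even_or_odd k with ⟨j, hj⟩ | ⟨j, hj⟩
    · refine ⟨Nv, ?_⟩
      have he : ψ + (k:ℝ)*Real.pi = ψ + (j:ℤ) * (2*Real.pi) := by rw [hj]; push_cast; ring
      rw [he, Real.cos_add_int_mul_two_pi, Real.sin_add_int_mul_two_pi]
      have e1 : Nv * Real.cos ψ = v.1 := by rw [hcosψ]; field_simp
      have e2 : Nv * Real.sin ψ = v.2 := by rw [hsinψ]; field_simp
      have hp : Nv • (Real.cos ψ, Real.sin ψ) = (v.1, v.2) := by
        rw [Prod.smul_mk, smul_eq_mul, smul_eq_mul, e1, e2]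
      rw [hp]
    · refine ⟨-Nv, ?_⟩
      have he : ψ + (k:ℝ)*Real.pi = (ψ + Real.pi) + (j:ℤ) * (2*Real.pi) := by rw [hj]; push_cast; ring
      rw [he, Real.cos_add_int_mul_two_pi, Real.sin_add_int_mul_two_pi, Real.cos_add_pi, Real.sin_add_pi]
      have e1 : Nv * Real.cos ψ = v.1 := by rw [hcosψ]; field_simp
      have e2 : Nv * Real.sin ψ = v.2 := by rw [hsinψ]; field_simp
      have hp : (-Nv) • (-Real.cos ψ, -Real.sin ψ) = (v.1, v.2) := by
        rw [Prod.smul_mk, smul_eq_mul, smul_eq_mul, mul_neg, mul_neg, neg_mul, neg_neg, neg_mul, neg_neg, e1, e2]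
      rw [hp]

lemma seg_char (q xx yy : ℝ × ℝ) (hq : q ∉ segment ℝ xx yy) :
    ∃ a b : ℝ, a ≤ b ∧ b - a < Real.pi ∧
      {θ : ℝ | (lineThrough2 q (Real.cos θ, Real.sin θ) ∩ segment ℝ xx yy).Nonempty}
        = {θ : ℝ | ∃ k : ℤ, θ ∈ Icc (a + k*Real.pi) (b + k*Real.pi)} := by
  have hseg : segment ℝ xx yy = (fun t : ℝ => (1-t) • xx + t • yy) '' Icc 0 1 :=
    segment_eq_image ℝ xx yy
  have hcomp : IsCompact (segment ℝ xx yy) := by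
    rw [hseg]
    exact isCompact_Icc.image (by continuity)
  obtain ⟨f, u, hu1, hu2⟩ :=
    geometric_hahn_banach_point_closed (convex_segment xx yy) hcomp.isClosed hq
  set w1 := f (1, 0) with hw1
  set w2 := f (0, 1) with hw2
  have hF : ∀ v : ℝ × ℝ, f v = v.1 * w1 + v.2 * w2 := by
    intro v
    have hv : v = v.1 • ((1:ℝ), (0:ℝ)) + v.2 • ((0:ℝ), (1:ℝ)) := by
      ext <;> simp
    rw [hv, map_add, map_smul, map_smul]
    simp [smul_eq_mul, hw1, hw2]
  have hsep : ∀ p ∈ segment ℝ xx yy, 0 < (p - q).1 * w1 + (p - q).2 * w2 := by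
    intro p hp
    have : f (p - q) = f p - f q := map_sub f p q
    rw [hF] at this
    have h2 := hu2 p hp
    linarith [this, h2, hu1]
  have hw : 0 < w1 ^ 2 + w2 ^ 2 := by
    by_contra hcon
    push_neg at hcon
    have e1 : w1 = 0 := by nlinarith [sq_nonneg w1, sq_nonneg w2]
    have e2 : w2 = 0 := by nlinarith [sq_nonneg w1, sq_nonneg w2]
    have := hsep xx (left_mem_segment ℝ xx yy)
    rw [e1, e2] at this
    simp at this
  set n := Real.sqrt (w1 ^ 2 + w2 ^ 2) with hn_def
  have hn : 0 < n := Real.sqrt_pos.2 hw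
  set z : ℂ := ⟨w1, w2⟩ with hz_def
  have hzabs : ‖z‖ = n := by
    rw [Complex.norm_def, hn_def]
    congr 1
    rw [Complex.normSq_mk]
    ring
  have hz : z ≠ 0 := by
    intro h0
    rw [h0] at hzabs
    simp at hzabs
    rw [← hzabs] at hn
    exact lt_irrefl _ hn
  set φ := Complex.arg z with hφ_def
  have hcos : Real.cos φ = w1 / n := by
    rw [hφ_def, Complex.cos_arg hz, hzabs]
  have hsin : Real.sin φ = w2 / n := by
    rw [hφ_def, Complex.sin_arg, hzabs]
  set h : ℝ → ℝ := fun t =>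
    φ + Real.arctan ((((1-t) • xx + t • yy - q).2 * w1 - ((1-t) • xx + t • yy - q).1 * w2)
      / (((1-t) • xx + t • yy - q).1 * w1 + ((1-t) • xx + t • yy - q).2 * w2)) with hh_def
  have hmem : ∀ t ∈ Icc (0:ℝ) 1, (1-t) • xx + t • yy ∈ segment ℝ xx yy := by
    intro t ht
    rw [hseg]
    exact ⟨t, ht, rfl⟩
  have hcont : ContinuousOn h (Icc 0 1) := by
    apply ContinuousOn.add continuousOn_const
    apply Real.continuous_arctan.comp_continuousOn
    apply ContinuousOn.div
    · fun_prop
    · fun_prop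
    · intro t ht
      exact ne_of_gt (hsep _ (hmem t ht))
  have himg : h '' Icc 0 1 = Icc (sInf (h '' Icc 0 1)) (sSup (h '' Icc 0 1)) :=
    ContinuousOn.image_Icc zero_le_one hcont
  set a := sInf (h '' Icc 0 1) with ha_def
  set b := sSup (h '' Icc 0 1) with hb_def
  have hne : h 0 ∈ h '' Icc 0 1 := mem_image_of_mem h (by norm_num)
  have hab : a ≤ b := by
    rw [himg] at hne
    exact le_trans hne.1 hne.2
  have hbound : ∀ s ∈ h '' Icc 0 1, s ∈ Ioo (φ - Real.pi/2) (φ + Real.pi/2) := by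
    rintro s ⟨t, ht, rfl⟩
    constructor
    · have := Real.neg_pi_div_two_lt_arctan ((((1-t) • xx + t • yy - q).2 * w1 - ((1-t) • xx + t • yy - q).1 * w2)
      / (((1-t) • xx + t • yy - q).1 * w1 + ((1-t) • xx + t • yy - q).2 * w2))
      simp only [hh_def]
      linarith
    · have := Real.arctan_lt_pi_div_two ((((1-t) • xx + t • yy - q).2 * w1 - ((1-t) • xx + t • yy - q).1 * w2)
      / (((1-t) • xx + t • yy - q).1 * w1 + ((1-t) • xx + t • yy - q).2 * w2))
      simp only [hh_def]
      linarith
  have hlen : b - a < Real.pi := by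
    have ha' := hbound a (by rw [himg]; exact ⟨le_refl a, hab⟩)
    have hb' := hbound b (by rw [himg]; exact ⟨hab, le_refl b⟩)
    have := ha'.1; have := hb'.2
    linarith
  refine ⟨a, b, hab, hlen, ?_⟩
  ext θ
  simp only [mem_setOf_eq]
  constructor
  · rintro ⟨p, hpl, hps⟩
    obtain ⟨t, ht, hpt⟩ := by rw [hseg] at hps; exact hps
    obtain ⟨r, hr⟩ := hpl
    have hvpos := hsep p hps
    have : ∃ r : ℝ, (p - q) = r • (Real.cos θ, Real.sin θ) := ⟨r, by rw [hr]; abel⟩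
    rw [angle_char w1 w2 φ hw hcos hsin (p - q) hvpos θ] at this
    obtain ⟨k, hk⟩ := this
    have hmem' : h t ∈ Icc a b := by rw [← himg]; exact mem_image_of_mem h ht
    have hpt' : (1 - t) • xx + t • yy = p := hpt
    have hht : h t = φ + Real.arctan (((p - q).2 * w1 - (p - q).1 * w2)
        / ((p - q).1 * w1 + (p - q).2 * w2)) := by
      show φ + Real.arctan _ = _
      rw [hpt']
    refine ⟨k, ?_, ?_⟩
    · rw [hk, ← hht]; linarith [hmem'.1]
    · rw [hk, ← hht]; linarith [hmem'.2]
  · rintro ⟨k, hk1, hk2⟩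
    have : θ - k * Real.pi ∈ Icc a b := ⟨by linarith [hk1], by linarith [hk2]⟩
    rw [← himg] at this
    obtain ⟨t, ht, hht⟩ := this
    set p := (1-t) • xx + t • yy with hp_def
    have hps : p ∈ segment ℝ xx yy := hmem t ht
    have hvpos := hsep p hps
    have : ∃ r : ℝ, (p - q) = r • (Real.cos θ, Real.sin θ) := by
      rw [angle_char w1 w2 φ hw hcos hsin (p - q) hvpos θ]
      refine ⟨k, ?_⟩
      show θ = h t + (k:ℝ) * Real.pi
      linarith [hht]
    obtain ⟨r, hr⟩ := this
    exact ⟨p, ⟨r, by rw [← hr]; abel⟩, hps⟩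

/-- for a point `q` and `m` segments in ℝ², the image `A` in `AddCircle π`
of the set of angles `θ` whose line through `q` meets every segment has at most `m`
connected components. -/
theorem stmt_13 (m : ℕ) (hm : 1 ≤ m) (q : ℝ × ℝ) (x y : Fin m → ℝ × ℝ)
    (A : Set (AddCircle Real.pi))
    (hA : A = (fun θ : ℝ => (θ : AddCircle Real.pi)) ''
      {θ : ℝ | ∀ i, (lineThrough2 q (Real.cos θ, Real.sin θ) ∩
        segment ℝ (x i) (y i)).Nonempty}) :
    A = ∅ ∨ ∃ θ : Fin m → AddCircle Real.pi, (∀ j, θ j ∈ A) ∧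
      ∀ ξ ∈ A, ∃ j, ξ ∈ connectedComponentIn A (θ j) := by
  classical
  by_cases hAe : A = ∅
  · exact Or.inl hAe
  right
  have hπ : (0:ℝ) < Real.pi := Real.pi_pos
  set S : Set ℝ := {θ : ℝ | ∀ i, (lineThrough2 q (Real.cos θ, Real.sin θ) ∩
      segment ℝ (x i) (y i)).Nonempty} with hS_def
  have hcoe : Continuous (fun θ : ℝ => (θ : AddCircle Real.pi)) := AddCircle.continuous_mk' _
  have hBsubA : ∀ θ ∈ S, (θ : AddCircle Real.pi) ∈ A := by
    intro θ hθ; rw [hA]; exact mem_image_of_mem _ hθ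
  have hfull : ∀ i, q ∈ segment ℝ (x i) (y i) → ∀ θ : ℝ,
      (lineThrough2 q (Real.cos θ, Real.sin θ) ∩ segment ℝ (x i) (y i)).Nonempty := by
    intro i hi θ
    exact ⟨q, ⟨0, by simp⟩, hi⟩
  -- the case where every segment contains q
  by_cases hallfull : ∀ i, q ∈ segment ℝ (x i) (y i)
  · have hSuniv : S = univ := by
      ext θ; simp only [hS_def, mem_setOf_eq, mem_univ, iff_true]
      intro i; exact hfull i (hallfull i) θ
    have hAuniv : A = univ := by
      rw [hA, hSuniv, image_univ]
      apply range_eq_univ.2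
      intro ξ
      induction ξ using QuotientAddGroup.induction_on with
      | H θ => exact ⟨θ, rfl⟩
    refine ⟨fun _ => (0 : AddCircle Real.pi), fun j => by rw [hAuniv]; trivial, ?_⟩
    intro ξ hξ
    refine ⟨⟨0, by omega⟩, ?_⟩
    rw [hAuniv, connectedComponentIn_univ]
    have : ConnectedSpace (AddCircle Real.pi) := inferInstance
    rw [PreconnectedSpace.connectedComponent_eq_univ]
    trivial
  push_neg at hallfull
  obtain ⟨i₀, hi₀⟩ := hallfull
  -- choose arc data
  have hchoice : ∀ i, ∃ ab : ℝ × ℝ, ab.1 ≤ ab.2 ∧ ab.2 - ab.1 < Real.pi ∧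
      (q ∉ segment ℝ (x i) (y i) →
        {θ : ℝ | (lineThrough2 q (Real.cos θ, Real.sin θ) ∩ segment ℝ (x i) (y i)).Nonempty}
          = {θ : ℝ | ∃ k : ℤ, θ ∈ Icc (ab.1 + k*Real.pi) (ab.2 + k*Real.pi)}) := by
    intro i
    by_cases hqi : q ∈ segment ℝ (x i) (y i)
    · exact ⟨(0, 0), le_refl 0, by simpa using hπ, fun h => absurd hqi h⟩
    · obtain ⟨a, b, h1, h2, h3⟩ := seg_char q (x i) (y i) hqi
      exact ⟨(a, b), h1, h2, fun _ => h3⟩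
  choose ab hab hlen hchar using hchoice
  set a : Fin m → ℝ := fun i => (ab i).1 with ha_def
  set b : Fin m → ℝ := fun i => (ab i).2 with hb_def
  -- the cut point
  set c : ℝ := (b i₀ + a i₀ + Real.pi)/2 with hc_def
  have hc1 : b i₀ < c := by
    have := hlen i₀; simp only [hc_def]; linarith
  have hc2 : c < a i₀ + Real.pi := by
    have := hab i₀; simp only [hc_def]; linarith
  -- normalized arc left endpoints
  set α : Fin m → ℝ := fun i => toIocMod hπ (c - Real.pi) (a i) with hα_def
  set β : Fin m → ℝ := fun i => α i + (b i - a i) with hβ_def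
  have hαmem : ∀ i, α i ∈ Ioc (c - Real.pi) c := by
    intro i
    have := toIocMod_mem_Ioc hπ (c - Real.pi) (a i)
    rwa [sub_add_cancel] at this
  have hαa : ∀ i, ∃ k : ℤ, α i = a i - k * Real.pi := by
    intro i
    refine ⟨toIocDiv hπ (c - Real.pi) (a i), ?_⟩
    have := self_sub_toIocMod hπ (c - Real.pi) (a i)
    rw [zsmul_eq_mul] at this
    simp only [hα_def]
    linarith
  have hβα : ∀ i, β i - Real.pi < α i := by
    intro i; have := hlen i; simp only [hβ_def]; linarith
  have hαβ : ∀ i, α i ≤ β i := by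
    intro i; have := hab i; simp only [hβ_def]; linarith
  -- characterization of T i in terms of α β
  have hcharα : ∀ i, q ∉ segment ℝ (x i) (y i) → ∀ θ : ℝ,
      ((lineThrough2 q (Real.cos θ, Real.sin θ) ∩ segment ℝ (x i) (y i)).Nonempty ↔
        ∃ k : ℤ, α i + k*Real.pi ≤ θ ∧ θ ≤ β i + k*Real.pi) := by
    intro i hqi θ
    have h3 := hchar i hqi
    have heq : θ ∈ {θ : ℝ | (lineThrough2 q (Real.cos θ, Real.sin θ) ∩
        segment ℝ (x i) (y i)).Nonempty} ↔ θ ∈ {θ : ℝ | ∃ k : ℤ,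
        θ ∈ Icc ((ab i).1 + k*Real.pi) ((ab i).2 + k*Real.pi)} := by rw [h3]
    simp only [mem_setOf_eq, mem_Icc] at heq
    rw [heq]
    obtain ⟨kd, hkd⟩ := hαa i
    have hβi : β i = α i + (b i - a i) := rfl
    constructor
    · rintro ⟨k, h1, h2⟩
      refine ⟨k + kd, ?_, ?_⟩ <;> (push_cast; nlinarith [hkd, h1, h2, hβi])
    · rintro ⟨k, h1, h2⟩
      refine ⟨k - kd, ?_, ?_⟩ <;> (push_cast; nlinarith [hkd, h1, h2, hβi])
  -- window
  set W : Set ℝ := Ioo (c - Real.pi) c with hW_def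
  set B : Set ℝ := S ∩ W with hB_def
  have hdec : ∀ i, q ∉ segment ℝ (x i) (y i) → ∀ θ ∈ W,
      ((lineThrough2 q (Real.cos θ, Real.sin θ) ∩ segment ℝ (x i) (y i)).Nonempty ↔
        (θ ≤ β i - Real.pi ∨ (α i ≤ θ ∧ θ ≤ β i))) := by
    intro i hqi θ hθ
    obtain ⟨hθ1, hθ2⟩ := hθ
    rw [hcharα i hqi θ]
    have hαi := hαmem i
    have hβαi := hβα i
    have hαβi := hαβ i
    constructor
    · rintro ⟨k, h1, h2⟩
      have hsplit : k ≤ -2 ∨ k = -1 ∨ k = 0 ∨ 1 ≤ k := by omega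
      rcases hsplit with hk | hk | hk | hk
      · exfalso
        have hk' : (k:ℝ) ≤ -2 := by exact_mod_cast hk
        have : (k:ℝ)*Real.pi ≤ -2*Real.pi := by nlinarith
        linarith [hαi.2]
      · left
        rw [hk] at h2; push_cast at h2; linarith
      · right
        rw [hk] at h1 h2; push_cast at h1 h2; exact ⟨by linarith, by linarith⟩
      · exfalso
        have hk' : (1:ℝ) ≤ k := by exact_mod_cast hk
        have : Real.pi ≤ (k:ℝ)*Real.pi := by nlinarith
        linarith [hαi.1]
    · rintro (h | ⟨h1, h2⟩)
      · exact ⟨-1, by push_cast; linarith [hαi.2], by push_cast; linarith⟩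
      · exact ⟨0, by push_cast; linarith, by push_cast; linarith⟩
  have hαi₀ : α i₀ = a i₀ ∧ β i₀ = b i₀ := by
    have hself : toIocMod hπ (c - Real.pi) (a i₀) = a i₀ := by
      rw [toIocMod_eq_self, sub_add_cancel]
      exact ⟨by linarith, by linarith [hab i₀]⟩
    refine ⟨hself, ?_⟩
    have hβi : β i₀ = α i₀ + (b i₀ - a i₀) := rfl
    have hαeq : α i₀ = a i₀ := hself
    rw [hβi, hαeq]; ring
  have hcS : c ∉ S := by
    intro hc
    have hmem := hc i₀
    rw [hcharα i₀ hi₀ c] at hmem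
    obtain ⟨k, h1, h2⟩ := hmem
    rw [hαi₀.1] at h1; rw [hαi₀.2] at h2
    have hsplit : k ≤ 0 ∨ 1 ≤ k := by omega
    rcases hsplit with hk | hk
    · have hk' : (k:ℝ) ≤ 0 := by exact_mod_cast hk
      have : (k:ℝ)*Real.pi ≤ 0 := by nlinarith
      linarith
    · have hk' : (1:ℝ) ≤ k := by exact_mod_cast hk
      have : Real.pi ≤ (k:ℝ)*Real.pi := by nlinarith
      linarith
  have hper : ∀ θ : ℝ, ∀ k : ℤ, θ ∈ S → θ - k*Real.pi ∈ S := by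
    intro θ k hθ i
    by_cases hqi : q ∈ segment ℝ (x i) (y i)
    · exact hfull i hqi _
    · have hmem := hθ i
      rw [hcharα i hqi θ] at hmem
      rw [hcharα i hqi (θ - k*Real.pi)]
      obtain ⟨k', h1, h2⟩ := hmem
      exact ⟨k' - k, by push_cast; linarith, by push_cast; linarith⟩
  have hlift : ∀ ξ ∈ A, ∃ θ, θ ∈ B ∧ (θ : AddCircle Real.pi) = ξ := by
    intro ξ hξ
    rw [hA] at hξ
    obtain ⟨s, hs, hsξ⟩ := hξ
    set θ := toIocMod hπ (c - Real.pi) s with hθ_def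
    have hθmem : θ ∈ Ioc (c - Real.pi) c := by
      have := toIocMod_mem_Ioc hπ (c - Real.pi) s
      rwa [sub_add_cancel] at this
    have hθS : θ ∈ S := by
      have h := self_sub_toIocMod hπ (c - Real.pi) s
      rw [zsmul_eq_mul] at h
      have heq : θ = s - (toIocDiv hπ (c - Real.pi) s) * Real.pi := by
        simp only [hθ_def]; linarith
      rw [heq]
      exact hper s _ hs
    have hθc : θ ≠ c := by
      intro h
      rw [h] at hθS
      exact hcS hθS
    have hcoeq : (θ : AddCircle Real.pi) = ξ := by
      rw [← hsξ]
      have h := self_sub_toIocMod hπ (c - Real.pi) s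
      have hmem2 : θ - s ∈ AddSubgroup.zmultiples Real.pi := by
        rw [AddSubgroup.mem_zmultiples_iff]
        exact ⟨-(toIocDiv hπ (c - Real.pi) s), by rw [neg_zsmul, ← h, neg_sub]⟩
      exact QuotientAddGroup.eq_iff_sub_mem.2 hmem2
    exact ⟨θ, ⟨hθS, hθmem.1, lt_of_le_of_ne hθmem.2 hθc⟩, hcoeq⟩
  have hi₀le : ∀ θ ∈ B, α i₀ ≤ θ := by
    intro θ hθ
    have hmem := (hdec i₀ hi₀ θ hθ.2).1 (hθ.1 i₀)
    rcases hmem with h | h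
    · exfalso
      have h1 := hθ.2.1
      have h2 : β i₀ = b i₀ := hαi₀.2
      rw [h2] at h
      linarith
    · exact h.1
  set K : ℝ → ℕ := fun θ => (Finset.univ.filter (fun i => α i ≤ θ)).card with hK_def
  have hKmono : ∀ θ θ' : ℝ, θ ≤ θ' →
      (Finset.univ.filter (fun i => α i ≤ θ)) ⊆ (Finset.univ.filter (fun i => α i ≤ θ')) := by
    intro θ θ' h i hi
    simp only [Finset.mem_filter] at hi ⊢
    exact ⟨hi.1, le_trans hi.2 h⟩
  have hKiff : ∀ θ θ' : ℝ, θ ≤ θ' → K θ = K θ' → ∀ i, (α i ≤ θ ↔ α i ≤ θ') := by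
    intro θ θ' h hKeq i
    have heq := Finset.eq_of_subset_of_card_le (hKmono θ θ' h) (le_of_eq hKeq.symm)
    constructor
    · intro hh; exact le_trans hh h
    · intro hh
      have hmem : i ∈ Finset.univ.filter (fun i => α i ≤ θ) := by
        rw [heq]; simp only [Finset.mem_filter, Finset.mem_univ, true_and]; exact hh
      simp only [Finset.mem_filter] at hmem
      exact hmem.2
  have hIcc : ∀ θ θ', θ ∈ B → θ' ∈ B → θ ≤ θ' → K θ = K θ' → Icc θ θ' ⊆ B := by
    intro θ θ' hθ hθ' hle hKeq η hη
    obtain ⟨hθS, hθW⟩ := hθ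
    obtain ⟨hθ'S, hθ'W⟩ := hθ'
    have hηW : η ∈ W := ⟨lt_of_lt_of_le hθW.1 hη.1, lt_of_le_of_lt hη.2 hθ'W.2⟩
    refine ⟨?_, hηW⟩
    intro i
    by_cases hqi : q ∈ segment ℝ (x i) (y i)
    · exact hfull i hqi η
    · rw [hdec i hqi η hηW]
      have hθi := (hdec i hqi θ hθW).1 (hθS i)
      have hθ'i := (hdec i hqi θ' hθ'W).1 (hθ'S i)
      by_cases hαθ : α i ≤ θ
      · right
        have h2 : θ' ≤ β i := by
          rcases hθ'i with h | h
          · exfalso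
            have := hβα i
            have hαθ' : α i ≤ θ' := le_trans hαθ hle
            linarith
          · exact h.2
        exact ⟨le_trans hαθ hη.1, le_trans hη.2 h2⟩
      · left
        have hαθ' : ¬ α i ≤ θ' := fun hh => hαθ ((hKiff θ θ' hle hKeq i).2 hh)
        have h2 : θ' ≤ β i - Real.pi := by
          rcases hθ'i with h | h
          · exact h
          · exact absurd h.1 hαθ'
        exact le_trans hη.2 h2
  have hcompo : ∀ u v : ℝ, u ∈ B → v ∈ B → u ≤ v → K u = K v →
      (v : AddCircle Real.pi) ∈ connectedComponentIn A (u : AddCircle Real.pi) := by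
    intro u v hu hv hle hKeq
    have hsub : Icc u v ⊆ B := hIcc u v hu hv hle hKeq
    have himg : IsPreconnected ((fun r : ℝ => (r : AddCircle Real.pi)) '' Icc u v) :=
      isPreconnected_Icc.image _ hcoe.continuousOn
    have hsubA : (fun r : ℝ => (r : AddCircle Real.pi)) '' Icc u v ⊆ A := by
      rintro _ ⟨r, hr, rfl⟩
      exact hBsubA r (hsub hr).1
    exact himg.subset_connectedComponentIn (mem_image_of_mem _ (left_mem_Icc.2 hle)) hsubA
      (mem_image_of_mem _ (right_mem_Icc.2 hle))
  obtain ⟨ξ₀, hξ₀⟩ := nonempty_iff_ne_empty.2 hAe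
  obtain ⟨θ₀, hθ₀B, hθ₀ξ⟩ := hlift ξ₀ hξ₀
  set pickR : Fin m → ℝ := fun j =>
    if h : ∃ θ, θ ∈ B ∧ K θ = j.1 + 1 then h.choose else θ₀ with hpick_def
  have hpickB : ∀ j, pickR j ∈ B := by
    intro j
    simp only [hpick_def]
    by_cases h : ∃ θ, θ ∈ B ∧ K θ = j.1 + 1
    · rw [dif_pos h]; exact h.choose_spec.1
    · rw [dif_neg h]; exact hθ₀B
  have hpickK : ∀ j, (h : ∃ θ, θ ∈ B ∧ K θ = j.1 + 1) → K (pickR j) = j.1 + 1 := by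
    intro j h
    simp only [hpick_def]
    rw [dif_pos h]
    exact h.choose_spec.2
  refine ⟨fun j => (pickR j : AddCircle Real.pi), fun j => hBsubA _ (hpickB j).1, ?_⟩
  intro ξ hξ
  obtain ⟨θ, hθB, hθξ⟩ := hlift ξ hξ
  have hK1 : 1 ≤ K θ := by
    have hα₀ : α i₀ ≤ θ := hi₀le θ hθB
    have hmem : i₀ ∈ Finset.univ.filter (fun i => α i ≤ θ) := by
      simp only [Finset.mem_filter, Finset.mem_univ, true_and]; exact hα₀
    exact Finset.card_pos.2 ⟨i₀, hmem⟩
  have hKm : K θ ≤ m := by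
    refine le_trans (Finset.card_filter_le _ _) ?_
    simp
  set j : Fin m := ⟨K θ - 1, by omega⟩ with hj_def
  have hjval : j.1 = K θ - 1 := rfl
  have hex : ∃ θ', θ' ∈ B ∧ K θ' = j.1 + 1 := ⟨θ, hθB, by rw [hjval]; omega⟩
  refine ⟨j, ?_⟩
  have hpB := hpickB j
  have hpK : K (pickR j) = K θ := by rw [hpickK j hex, hjval]; omega
  rcases le_total (pickR j) θ with hle | hle
  · rw [← hθξ]
    exact hcompo _ _ hpB hθB hle hpK
  · rw [← hθξ]
    have h1 := hcompo _ _ hθB hpB hle hpK.symm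
    rw [← connectedComponentIn_eq h1]
    exact mem_connectedComponentIn (hBsubA θ hθB.1)
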